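/- arXiv:2102.05551 — 2 statements merged into one kernel-verified Lean document; each statement's English description precedes it below -/
import Mathlib

section
/- For the averaged KS system on the invariant set Ω̄ = 0, the equilibrium point (Σ̄, Q̄) = (1, −1) of the planar system Σ̄′ = ½((Σ̄² − 1)(−2Q̄² − 3(γ−2)Q̄Σ̄ + 2)), Q̄′ = −½(Q̄² − 1)(3γ(Σ̄² − 1) + 2Σ̄(Q̄ − 3Σ̄) + 2) has linearization eigenvalues −6 and 3(γ − 2); in particular for 0 ≤ γ < 2 both eigenvalues are negative (the point is hyperbolic and linearly stable). -/
lemma KS_aux_eig (J : Matrix (Fin 2) (Fin 2) ℝ) (a d : ℝ)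
    (hJ : J = !![a, 0; 0, d]) :
    Module.End.HasEigenvalue (Matrix.toLin' J) a ∧
    Module.End.HasEigenvalue (Matrix.toLin' J) d := by
  subst hJ
  constructor
  · apply Module.End.hasEigenvalue_of_hasEigenvector (x := ![1, 0])
    refine ⟨?_, ?_⟩
    · rw [Module.End.mem_eigenspace_iff]
      ext i
      fin_cases i <;>
        simp [Matrix.toLin'_apply, Matrix.mulVec, dotProduct, Fin.sum_univ_two]
    · intro h; simpa using congrFun h 0
  · apply Module.End.hasEigenvalue_of_hasEigenvector (x := ![0, 1])
    refine ⟨?_, ?_⟩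
    · rw [Module.End.mem_eigenspace_iff]
      ext i
      fin_cases i <;>
        simp [Matrix.toLin'_apply, Matrix.mulVec, dotProduct, Fin.sum_univ_two]
    · intro h; simpa using congrFun h 1

/-- For the averaged Kantowski–Sachs system on the invariant set `Ω̄ = 0`, the equilibrium
point `(Σ̄, Q̄) = (1, −1)` of the planar system has linearization eigenvalues `−6` and
`3(γ − 2)`; for `0 ≤ γ < 2` both eigenvalues are negative. -/
theorem KS_equilibrium_P3_eigenvalues
    (γ : ℝ) (hγ0 : 0 ≤ γ) (hγ2 : γ ≤ 2)
    (F₁ F₂ : ℝ → ℝ → ℝ)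
    (hF₁ : ∀ S Q, F₁ S Q = (1/2) * (S ^ 2 - 1) * (-2 * Q ^ 2 - 3 * (γ - 2) * Q * S + 2))
    (hF₂ : ∀ S Q, F₂ S Q =
      -(1/2) * (Q ^ 2 - 1) * (3 * γ * (S ^ 2 - 1) + 2 * S * (Q - 3 * S) + 2))
    (J : Matrix (Fin 2) (Fin 2) ℝ)
    (hJ : J = !![deriv (fun S => F₁ S (-1)) 1, deriv (fun Q => F₁ 1 Q) (-1);
                 deriv (fun S => F₂ S (-1)) 1, deriv (fun Q => F₂ 1 Q) (-1)]) :
    (F₁ 1 (-1) = 0 ∧ F₂ 1 (-1) = 0) ∧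
    Module.End.HasEigenvalue (Matrix.toLin' J) (-6) ∧
    Module.End.HasEigenvalue (Matrix.toLin' J) (3 * (γ - 2)) ∧
    (γ < 2 → (-6 : ℝ) < 0 ∧ 3 * (γ - 2) < 0) := by
  have h11 : deriv (fun S => F₁ S (-1)) 1 = 3 * (γ - 2) := by
    have hfun : (fun S : ℝ => F₁ S (-1))
        = fun S => (3 * (γ - 2) / 2) * S ^ 3 - (3 * (γ - 2) / 2) * S := by
      funext S; rw [hF₁]; ring
    rw [hfun]
    have h := (((hasDerivAt_pow 3 (1 : ℝ)).const_mul (3 * (γ - 2) / 2)).sub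
      ((hasDerivAt_id (1 : ℝ)).const_mul (3 * (γ - 2) / 2)))
    simp only [id_eq] at h
    refine h.deriv.trans ?_; ring
  have h12 : deriv (fun Q => F₁ 1 Q) (-1 : ℝ) = 0 := by
    have hfun : (fun Q : ℝ => F₁ 1 Q) = fun _ => (0 : ℝ) := by
      funext Q; rw [hF₁]; ring
    rw [hfun, deriv_const]
  have h21 : deriv (fun S => F₂ S (-1)) (1 : ℝ) = 0 := by
    have hfun : (fun S : ℝ => F₂ S (-1)) = fun _ => (0 : ℝ) := by
      funext S; rw [hF₂]; ring
    rw [hfun, deriv_const]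
  have h22 : deriv (fun Q => F₂ 1 Q) (-1 : ℝ) = -6 := by
    have hfun : (fun Q : ℝ => F₂ 1 Q)
        = fun Q => -Q ^ 3 + 2 * Q ^ 2 + (Q - 2) := by
      funext Q; rw [hF₂]; ring
    rw [hfun]
    have h := (((hasDerivAt_pow 3 ((-1) : ℝ)).neg).add
      ((hasDerivAt_pow 2 ((-1) : ℝ)).const_mul 2)).add
      ((hasDerivAt_id ((-1) : ℝ)).sub_const 2)
    simp only [id_eq] at h
    refine h.deriv.trans ?_; norm_num
  have hJ' : J = !![3 * (γ - 2), 0; 0, -6] := by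
    rw [hJ, h11, h12, h21, h22]
  obtain ⟨e1, e2⟩ := KS_aux_eig J (3 * (γ - 2)) (-6) hJ'
  refine ⟨⟨by rw [hF₁]; ring, by rw [hF₂]; ring⟩, e2, e1, fun h => ⟨by norm_num, by linarith⟩⟩
end

section
/- For the planar vector field θ′ = ½ sin θ (3 Q̄ cos θ − 2Q̄² + 2), Q̄′ = ¼(Q̄² − 1)(−4Q̄ cos θ + 3 cos 2θ + 5), the point (θ, Q̄) = (π/2, 1) is an equilibrium whose Jacobian has eigenvalues −3/2 and 1, hence it is a hyperbolic saddle. -/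
/-- For the planar vector field `θ′ = ½ sin θ (3Q̄ cos θ − 2Q̄² + 2)`,
`Q̄′ = ¼(Q̄² − 1)(−4Q̄ cos θ + 3 cos 2θ + 5)`, the point `(θ, Q̄) = (π/2, 1)` is an
equilibrium whose Jacobian has eigenvalues `−3/2` and `1`, hence a hyperbolic saddle. -/
theorem KS_vacuum_boundary_saddle
    (G₁ G₂ : ℝ → ℝ → ℝ)
    (hG₁ : ∀ θ Q, G₁ θ Q = (1/2) * Real.sin θ * (3 * Q * Real.cos θ - 2 * Q ^ 2 + 2))
    (hG₂ : ∀ θ Q, G₂ θ Q =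
      (1/4) * (Q ^ 2 - 1) * (-4 * Q * Real.cos θ + 3 * Real.cos (2 * θ) + 5))
    (J : Matrix (Fin 2) (Fin 2) ℝ)
    (hJ : J = !![deriv (fun θ => G₁ θ 1) (Real.pi / 2), deriv (fun Q => G₁ (Real.pi / 2) Q) 1;
                 deriv (fun θ => G₂ θ 1) (Real.pi / 2), deriv (fun Q => G₂ (Real.pi / 2) Q) 1]) :
    (G₁ (Real.pi / 2) 1 = 0 ∧ G₂ (Real.pi / 2) 1 = 0) ∧
    Module.End.HasEigenvalue (Matrix.toLin' J) (-(3/2)) ∧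
    Module.End.HasEigenvalue (Matrix.toLin' J) 1 ∧
    (-(3/2) : ℝ) < 0 ∧ (0:ℝ) < 1 := by
  have hcos : Real.cos (Real.pi/2) = 0 := Real.cos_pi_div_two
  have hsin : Real.sin (Real.pi/2) = 1 := Real.sin_pi_div_two
  have e1 : deriv (fun θ => G₁ θ 1) (Real.pi/2) = -(3/2) := by
    have h2 : (fun θ => G₁ θ 1) =
        fun θ : ℝ => 1/2 * Real.sin θ * (3*1 * Real.cos θ - 2*1^2 + 2) := by
      funext θ; rw [hG₁]
    have h' := (((Real.hasDerivAt_sin (Real.pi/2)).const_mul ((1:ℝ)/2)).mul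
      ((((Real.hasDerivAt_cos (Real.pi/2)).const_mul ((3:ℝ)*1)).sub_const ((2:ℝ)*1^2)).add_const 2))
    rw [h2, (show HasDerivAt (fun θ : ℝ => 1/2 * Real.sin θ * (3*1 * Real.cos θ - 2*1^2 + 2)) _ (Real.pi/2) from h').deriv]
    rw [hcos, hsin]; ring
  have e2 : deriv (fun Q => G₁ (Real.pi/2) Q) 1 = -2 := by
    have h2 : (fun Q => G₁ (Real.pi/2) Q) =
        fun Q : ℝ => 1 - Q ^ 2 := by
      funext Q; rw [hG₁, hcos, hsin]; ring
    have h' := (hasDerivAt_pow 2 (1:ℝ)).const_sub 1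
    rw [h2, h'.deriv]; norm_num
  have e3 : deriv (fun θ => G₂ θ 1) (Real.pi/2) = 0 := by
    have h2 : (fun θ => G₂ θ 1) = fun _ : ℝ => (0:ℝ) := by
      funext θ; rw [hG₂]; norm_num
    rw [h2, deriv_const]
  have e4 : deriv (fun Q => G₂ (Real.pi/2) Q) 1 = 1 := by
    have h2 : (fun Q => G₂ (Real.pi/2) Q) = fun Q : ℝ => 1/2 * (Q ^ 2 - 1) := by
      funext Q; rw [hG₂, show (2:ℝ) * (Real.pi/2) = Real.pi by ring, Real.cos_pi, hcos]; ring
    have h' := (((hasDerivAt_pow 2 (1:ℝ)).sub_const (1:ℝ)).const_mul ((1:ℝ)/2))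
    rw [h2, h'.deriv]; norm_num
  have hJ' : J = !![-(3/2), -2; 0, 1] := by
    rw [hJ, e1, e2, e3, e4]
  have hv1 : Module.End.HasEigenvector (Matrix.toLin' J) (-(3/2)) ![1, 0] := by
    constructor
    · rw [Module.End.mem_eigenspace_iff, Matrix.toLin'_apply, hJ']
      funext i
      fin_cases i <;>
        simp [Matrix.mulVec, dotProduct, Fin.sum_univ_two]
    · intro h
      have := congrFun h 0
      simp at this
  have hv2 : Module.End.HasEigenvector (Matrix.toLin' J) 1 ![(-4), 5] := by
    constructor
    · rw [Module.End.mem_eigenspace_iff, Matrix.toLin'_apply, hJ']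
      funext i
      fin_cases i <;>
        simp [Matrix.mulVec, dotProduct, Fin.sum_univ_two]
      norm_num
    · intro h
      have := congrFun h 1
      simp at this
  refine ⟨⟨?_, ?_⟩, Module.End.hasEigenvalue_of_hasEigenvector hv1,
    Module.End.hasEigenvalue_of_hasEigenvector hv2, by norm_num, one_pos⟩
  · rw [hG₁, hcos, hsin]; ring
  · rw [hG₂]; norm_num
end
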